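/- Suppose f : ℝ → ℝ is continuous and there exists θ > 2N such that 0 < θ·F(t) ≤ t·f(t) for all t ≠ 0, where F(t) = ∫₀ᵗ f(s) ds, and suppose lim_{t→0} f(t)/|t|^{N−1} = 0. Then there exist constants C₃, C₄ > 0 such that f(t)·t ≥ C₃·|t|^θ − C₄·|t|^N for all t ∈ ℝ. -/

import Mathlib

open Set

lemma aux_mono (F f : ℝ → ℝ) (θ : ℝ) (hθ : 0 < θ)
    (hd : ∀ t : ℝ, HasDerivAt F (f t) t)
    (h : ∀ t : ℝ, 1 ≤ t → θ * F t ≤ t * f t) :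
    ∀ t : ℝ, 1 ≤ t → F 1 * t ^ θ ≤ F t := by
  have hder : ∀ t : ℝ, 1 ≤ t → HasDerivAt (fun t => F t / t ^ θ)
      ((f t * t ^ θ - F t * (θ * t ^ (θ - 1))) / (t ^ θ) ^ 2) t := by
    intro t ht
    have ht0 : (0:ℝ) < t := lt_of_lt_of_le one_pos ht
    exact (hd t).div (Real.hasDerivAt_rpow_const (Or.inl ht0.ne')) (by positivity)
  have key : MonotoneOn (fun t => F t / t ^ θ) (Ici 1) := by
    apply monotoneOn_of_deriv_nonneg (convex_Ici 1)
    · exact fun t ht => (hder t ht).continuousAt.continuousWithinAt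
    · intro t ht
      rw [interior_Ici] at ht
      exact (hder t ht.le).differentiableAt.differentiableWithinAt
    · intro t ht
      rw [interior_Ici] at ht
      rw [(hder t ht.le).deriv]
      have ht0 : (0:ℝ) < t := lt_trans one_pos ht
      apply div_nonneg _ (by positivity)
      have h1 : t ^ θ = t ^ (θ - 1) * t := by
        rw [← Real.rpow_add_one ht0.ne' (θ - 1)]
        ring_nf
      have h2 : f t * t ^ θ - F t * (θ * t ^ (θ - 1))
          = t ^ (θ - 1) * (t * f t - θ * F t) := by rw [h1]; ring
      rw [h2]
      exact mul_nonneg (Real.rpow_nonneg ht0.le _) (sub_nonneg.mpr (h t ht.le))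
  intro t ht
  have ht0 : (0:ℝ) < t := lt_of_lt_of_le one_pos ht
  have := key (self_mem_Ici) (mem_Ici.mpr ht) ht
  simp only [Real.one_rpow, div_one] at this
  rw [← le_div_iff₀ (Real.rpow_pos_of_pos ht0 θ)]
  exact this

theorem stmt8 (N : ℕ) (hN : 2 ≤ N) (θ : ℝ) (hθ : 2 * (N : ℝ) < θ)
    (f : ℝ → ℝ) (hcont : Continuous f)
    (hAR : ∀ t : ℝ, t ≠ 0 →
      0 < θ * (∫ s in (0:ℝ)..t, f s) ∧ θ * (∫ s in (0:ℝ)..t, f s) ≤ t * f t)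
    (hlim : Filter.Tendsto (fun t : ℝ => f t / |t| ^ (N - 1))
      (nhdsWithin 0 {0}ᶜ) (nhds 0)) :
    ∃ C₃ > (0:ℝ), ∃ C₄ > (0:ℝ), ∀ t : ℝ,
      f t * t ≥ C₃ * |t| ^ θ - C₄ * |t| ^ N := by
  have hNpos : (0:ℝ) < N := by positivity
  have hθ0 : (0:ℝ) < θ := by linarith
  have hNθ : (N:ℝ) ≤ θ := by linarith
  set F : ℝ → ℝ := fun t => ∫ s in (0:ℝ)..t, f s with hFdef
  have hderiv : ∀ t : ℝ, HasDerivAt F (f t) t := by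
    intro t
    exact intervalIntegral.integral_hasDerivAt_right
      (hcont.intervalIntegrable 0 t) (hcont.stronglyMeasurableAtFilter _ _)
      hcont.continuousAt
  have hF1 : 0 < F 1 := by
    have := (hAR 1 one_ne_zero).1
    by_contra h
    push_neg at h
    nlinarith
  have hFm1 : 0 < F (-1) := by
    have := (hAR (-1) (by norm_num)).1
    by_contra h
    push_neg at h
    nlinarith
  -- growth on [1, ∞)
  have hpos : ∀ t : ℝ, 1 ≤ t → F 1 * t ^ θ ≤ F t :=
    aux_mono F f θ hθ0 hderiv (fun t ht => (hAR t (by linarith)).2)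
  -- growth on (-∞, -1]
  have hneg : ∀ t : ℝ, 1 ≤ t → F (-1) * t ^ θ ≤ F (-t) := by
    apply aux_mono (fun t => F (-t)) (fun t => -f (-t)) θ hθ0
    · intro t
      exact ((hderiv (-t)).comp t ((hasDerivAt_id t).neg)).congr_deriv (by simp)
    · intro t ht
      have := (hAR (-t) (by intro h; simp at h; linarith)).2
      linarith [this]
  set c : ℝ := min (F 1) (F (-1)) with hc
  have hcpos : 0 < c := lt_min hF1 hFm1
  refine ⟨θ * c, by positivity, θ * c, by positivity, fun t => ?_⟩
  rcases eq_or_ne t 0 with rfl | ht0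
  · simp [Real.zero_rpow hθ0.ne', zero_pow (by omega : N ≠ 0)]
  rcases le_or_gt (|t|) 1 with hsmall | hbig
  · -- |t| ≤ 1 : RHS ≤ 0 < LHS
    have habs : 0 < |t| := abs_pos.mpr ht0
    have h1 : |t| ^ θ ≤ |t| ^ (N:ℝ) :=
      Real.rpow_le_rpow_of_exponent_ge habs hsmall hNθ
    have h2 : |t| ^ (N:ℝ) = |t| ^ N := Real.rpow_natCast _ N
    have hlhs : 0 < f t * t := by
      have h3 := (hAR t ht0).1
      have h4 := (hAR t ht0).2
      nlinarith
    have : θ * c * |t| ^ θ - θ * c * |t| ^ N ≤ 0 := by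
      have := mul_le_mul_of_nonneg_left (h1.trans_eq h2) (by positivity : (0:ℝ) ≤ θ * c)
      linarith
    linarith
  · -- |t| ≥ 1
    have h4 := (hAR t ht0).2
    have hFt : c * |t| ^ θ ≤ F t := by
      rcases le_or_gt 1 t with ht1 | ht1
      · have := hpos t ht1
        have habs : |t| = t := abs_of_pos (by linarith)
        rw [habs]
        calc c * t ^ θ ≤ F 1 * t ^ θ := by
              apply mul_le_mul_of_nonneg_right (min_le_left _ _)
                (Real.rpow_nonneg (by linarith) _)
          _ ≤ F t := this
      · have htneg : 1 ≤ -t := by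
          rcases abs_cases t with ⟨h, _⟩ | ⟨h, _⟩
          · linarith [hbig.le.trans h.le]
          · linarith [h ▸ hbig.le]
        have := hneg (-t) htneg
        simp only [neg_neg] at this
        have habs : |t| = -t := abs_of_neg (by linarith)
        rw [habs]
        calc c * (-t) ^ θ ≤ F (-1) * (-t) ^ θ := by
              apply mul_le_mul_of_nonneg_right (min_le_right _ _)
                (Real.rpow_nonneg (by linarith) _)
          _ ≤ F t := this
    have hθF : θ * c * |t| ^ θ ≤ θ * F t := by
      have := mul_le_mul_of_nonneg_left hFt hθ0.le
      linarith
    have hNn : 0 ≤ θ * c * |t| ^ N := by positivity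
    nlinarith
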